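/- Let V be a nonzero finite-dimensional real inner product space of dimension n ≥ 1, and let f : V → V be a self-adjoint linear endomorphism that has at least one positive eigenvalue. Write the characteristic polynomial of f as Σ_{k=0}^n a_k u^k (so a_n = ±1 depending on sign convention; it is monic up to sign). Then sup{t ∈ ℝ : id − t·f is positive semidefinite} ≥ (1 + max_{0 ≤ k < n} |a_k / a_n|)^{−1}. (This is the linear-algebraic core of Corollary 3 of the paper, which lower-bounds the nef threshold σ(L,M) by (1 + max_{0≤k<n} (n choose k) L^k M^{n−k} / L^n)^{−1} using Cauchy's root bound applied to χ(uL−M).) -/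

import Mathlib

open RealInnerProductSpace Polynomial

/-- A linear endomorphism of a real inner product space is positive semidefinite
if it is self-adjoint and `⟪g v, v⟫ ≥ 0` for all `v`. -/
def IsPosSemidefEnd {V : Type*} [NormedAddCommGroup V] [InnerProductSpace ℝ V]
    (g : V →ₗ[ℝ] V) : Prop :=
  (∀ v w : V, ⟪g v, w⟫ = ⟪v, g w⟫) ∧ ∀ v : V, 0 ≤ ⟪g v, v⟫

-- Cauchy root bound for monic real polynomials
lemma cauchy_root_bound {p : ℝ[X]} {n : ℕ} (hn : 1 ≤ n) (hmon : p.Monic)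
    (hdeg : p.natDegree = n) {μ : ℝ} (hroot : p.IsRoot μ)
    (B : ℝ) (hB : ∀ k < n, |p.coeff k| ≤ B) : μ ≤ 1 + B := by
  have hB0 : 0 ≤ B := le_trans (abs_nonneg _) (hB 0 hn)
  by_contra hlt
  push_neg at hlt
  have h1 : 1 < μ := by linarith
  have hμ0 : 0 < μ := by linarith
  have heval : p.eval μ = ∑ k ∈ Finset.range (n + 1), p.coeff k * μ ^ k := by
    rw [eval_eq_sum_range, hdeg]
  rw [Finset.sum_range_succ] at heval
  have hcn : p.coeff n = 1 := by
    have := hmon.leadingCoeff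
    rwa [leadingCoeff, hdeg] at this
  rw [hcn, one_mul, hroot.eq_zero] at heval
  have hμn : μ ^ n = -∑ k ∈ Finset.range n, p.coeff k * μ ^ k := by linarith
  have habs : μ ^ n ≤ B * ∑ k ∈ Finset.range n, μ ^ k := by
    rw [hμn, Finset.mul_sum]
    refine le_trans (neg_le_abs _) (le_trans (Finset.abs_sum_le_sum_abs _ _) ?_)
    apply Finset.sum_le_sum
    intro k hk
    rw [abs_mul, abs_pow, abs_of_pos hμ0]
    exact mul_le_mul_of_nonneg_right (hB k (Finset.mem_range.mp hk)) (by positivity)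
  have hgeom : ∑ k ∈ Finset.range n, μ ^ k = (μ ^ n - 1) / (μ - 1) :=
    geom_sum_eq (ne_of_gt h1) n
  have hμn1 : 1 < μ ^ n := one_lt_pow₀ h1 (by omega)
  have hfin : B * ((μ ^ n - 1) / (μ - 1)) < μ ^ n := by
    rw [mul_div_assoc' , div_lt_iff₀ (by linarith : (0:ℝ) < μ - 1)]
    nlinarith [pow_pos hμ0 n]
  rw [hgeom] at habs
  linarith

/-- Linear-algebraic core of Corollary 3: for a self-adjoint endomorphism `f` of an
`n`-dimensional real inner product space (`n ≥ 1`) having a positive eigenvalue, with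
characteristic polynomial `Σ a_k u^k`, one has
`sup {t : id - t • f psd} ≥ (1 + max_{0 ≤ k < n} |a_k / a_n|)⁻¹`. -/
theorem stmt_4 {V : Type*} [NormedAddCommGroup V] [InnerProductSpace ℝ V]
    [FiniteDimensional ℝ V] (n : ℕ) (hn : 1 ≤ n) (hdim : Module.finrank ℝ V = n)
    (f : V →ₗ[ℝ] V) (hf : ∀ v w : V, ⟪f v, w⟫ = ⟪v, f w⟫)
    (hpos : ∃ μ : ℝ, Module.End.HasEigenvalue f μ ∧ 0 < μ) :
    (1 + (Finset.range n).sup' (Finset.nonempty_range_iff.mpr (by omega))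
        (fun k => |(LinearMap.charpoly f).coeff k / (LinearMap.charpoly f).coeff n|))⁻¹
      ≤ sSup {t : ℝ | IsPosSemidefEnd ((LinearMap.id : V →ₗ[ℝ] V) - t • f)} := by
  set p := LinearMap.charpoly f with hp
  have hmon : p.Monic := LinearMap.charpoly_monic f
  have hdeg : p.natDegree = n := by rw [hp, LinearMap.charpoly_natDegree, hdim]
  have hcn : p.coeff n = 1 := by
    have := hmon.leadingCoeff
    rwa [Polynomial.leadingCoeff, hdeg] at this
  set M := (Finset.range n).sup' (Finset.nonempty_range_iff.mpr (by omega))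
      (fun k => |p.coeff k / p.coeff n|) with hM
  have hMb : ∀ k < n, |p.coeff k| ≤ M := by
    intro k hk
    rw [show |p.coeff k| = |p.coeff k / p.coeff n| by rw [hcn, div_one]]
    exact Finset.le_sup' (fun k => |p.coeff k / p.coeff n|) (Finset.mem_range.mpr hk)
  have hM0 : 0 ≤ M := le_trans (abs_nonneg _) (hMb 0 hn)
  have ht0 : (0:ℝ) < (1 + M)⁻¹ := by positivity
  -- every eigenvalue is at most 1 + M
  have heig : ∀ lam : ℝ, Module.End.HasEigenvalue f lam → lam ≤ 1 + M := by
    intro lam hlam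
    have hroot : p.IsRoot lam := by
      obtain ⟨q, hq⟩ := LinearMap.minpoly_dvd_charpoly f
      have h1 := (Module.End.hasEigenvalue_iff_isRoot).mp hlam
      rw [hp, hq]
      exact Polynomial.IsRoot.dvd h1 ⟨q, rfl⟩
    exact cauchy_root_bound hn hmon hdeg hroot M hMb
  -- membership
  have hT : f.IsSymmetric := fun v w => hf v w
  have hmem : ((1 + M)⁻¹ : ℝ) ∈ {t : ℝ | IsPosSemidefEnd ((LinearMap.id : V →ₗ[ℝ] V) - t • f)} := by
    constructor
    · intro v w
      simp only [LinearMap.sub_apply, LinearMap.smul_apply, LinearMap.id_coe, id_eq,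
        inner_sub_left, inner_sub_right, real_inner_smul_left, real_inner_smul_right, hf v w]
    · intro v
      set e := hT.eigenvectorBasis hdim with he
      have hinner : ∀ x y : V, ⟪x, y⟫ = ∑ i, e.repr x i * e.repr y i := by
        intro x y
        rw [← e.repr.inner_map_map x y, PiLp.inner_apply]
        simp [RCLike.inner_apply, conj_trivial]
        exact Finset.sum_congr rfl fun _ _ => mul_comm _ _
      have hfv : ∀ i, e.repr (f v) i = hT.eigenvalues hdim i * e.repr v i :=
        fun i => hT.eigenvectorBasis_apply_self_apply hdim v i
      simp only [LinearMap.sub_apply, LinearMap.smul_apply, LinearMap.id_coe, id_eq,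
        inner_sub_left, real_inner_smul_left]
      rw [hinner (f v) v, hinner v v, sub_nonneg, Finset.mul_sum]
      apply Finset.sum_le_sum
      intro i _
      rw [hfv i]
      have hle : (1 + M)⁻¹ * hT.eigenvalues hdim i ≤ 1 := by
        rcases le_or_gt (hT.eigenvalues hdim i) 0 with h | h
        · nlinarith
        · have := heig _ (hT.hasEigenvalue_eigenvalues hdim i)
          have h' : hT.eigenvalues hdim i ≤ 1 + M := by exact_mod_cast this
          rw [inv_mul_le_iff₀ (by linarith : (0:ℝ) < 1 + M)]
          linarith
      nlinarith [sq_nonneg (e.repr v i)]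
  -- bounded above
  obtain ⟨ν, hν, hν0⟩ := hpos
  obtain ⟨w, hw⟩ := hν.exists_hasEigenvector
  have hbdd : BddAbove {t : ℝ | IsPosSemidefEnd ((LinearMap.id : V →ₗ[ℝ] V) - t • f)} := by
    refine ⟨ν⁻¹, fun t ht => ?_⟩
    have h2 := ht.2 w
    have hfw : f w = ν • w := hw.apply_eq_smul
    simp only [LinearMap.sub_apply, LinearMap.smul_apply, LinearMap.id_coe, id_eq, hfw,
      inner_sub_left, real_inner_smul_left, smul_smul] at h2
    have hnw : 0 < ‖w‖ := norm_pos_iff.mpr hw.2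
    have hw2 : (0:ℝ) < inner ℝ w w := by rw [real_inner_self_eq_norm_sq]; positivity
    have htν : t * ν ≤ 1 := by nlinarith
    have h3 : t * ν * ν⁻¹ ≤ 1 * ν⁻¹ := mul_le_mul_of_nonneg_right htν (inv_nonneg.mpr hν0.le)
    simpa [mul_assoc, mul_inv_cancel₀ hν0.ne'] using h3
  exact le_csSup hbdd hmem
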